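/- Let X₁, X₂, ... be i.i.d. nonnegative random variables with E[X₁] > 0 and E[exp(λ₀ X₁)] < ∞ for some λ₀ > 0. Let S_n = X₁ + ... + X_n and τ_x = inf{n ≥ 0 : S_n ≥ x}. Then there is a constant C > 0, depending only on the law of X₁ and λ₀, such that for all x ≥ 0 and all α > 0, P[S_{τ_x} − x ≥ α] ≤ C exp(−λ₀ α). -/

import Mathlib

open MeasureTheory Real Filter ProbabilityTheory

namespace Overshoot


variable {Ω : Type*} [MeasurableSpace Ω] {μ : Measure Ω} [IsProbabilityMeasure μ]
  {X : ℕ → Ω → ℝ} {l₀ : ℝ}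

lemma meas_S (hmeas : ∀ i, Measurable (X i)) (n : ℕ) :
    Measurable fun ω => ∑ j ∈ Finset.range n, X j ω :=
  Finset.measurable_sum _ fun i _ => hmeas i

/-- generic independence of events from disjoint blocks -/
lemma indep_pre (hindep : iIndepFun X μ)
    (hmeas : ∀ i, Measurable (X i)) (T U : Finset ℕ) (hTU : Disjoint T U)
    (sA : Set ((i : T) → ℝ)) (sB : Set ((i : U) → ℝ))
    (hsA : MeasurableSet sA) (hsB : MeasurableSet sB) :
    μ ((fun ω (i : T) => X i ω) ⁻¹' sA ∩ (fun ω (i : U) => X i ω) ⁻¹' sB)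
      = μ ((fun ω (i : T) => X i ω) ⁻¹' sA) * μ ((fun ω (i : U) => X i ω) ⁻¹' sB) :=
  (hindep.indepFun_finset T U hTU hmeas).measure_inter_preimage_eq_mul sA sB hsA hsB

lemma mgf_ident (hident : ∀ i, IdentDistrib (X i) (X 0) μ μ) (i : ℕ) (t : ℝ) :
    mgf (X i) μ t = mgf (X 0) μ t := by
  have hm : Measurable fun y : ℝ => Real.exp (t * y) := by fun_prop
  have h := ((hident i).comp hm).integral_eq
  simpa [mgf, Function.comp] using h

/-- Chernoff upper bound for a single variable -/
lemma chernoff_single (hmeas : ∀ i, Measurable (X i))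
    (hident : ∀ i, IdentDistrib (X i) (X 0) μ μ) (hl₀ : 0 < l₀)
    (hexp : Integrable (fun ω => Real.exp (l₀ * X 0 ω)) μ) (n : ℕ) (t : ℝ) :
    μ {ω | t ≤ X n ω} ≤ ENNReal.ofReal (Real.exp (-l₀ * t) * mgf (X 0) μ l₀) := by
  have h1 : μ {ω | t ≤ X n ω} = μ {ω | t ≤ X 0 ω} := by
    have := (hident n).measure_mem_eq (s := Set.Ici t) measurableSet_Ici
    simpa [Set.preimage, Set.mem_Ici] using this
  rw [h1]
  have h2 := measure_ge_le_exp_mul_mgf (μ := μ) (X := X 0) t hl₀.le hexp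
  calc μ {ω | t ≤ X 0 ω} = ENNReal.ofReal (μ {ω | t ≤ X 0 ω}).toReal :=
        (ENNReal.ofReal_toReal (measure_ne_top _ _)).symm
    _ ≤ _ := ENNReal.ofReal_le_ofReal h2


/-- Chernoff lower-tail bound for block sums -/
lemma chernoff_block (hmeas : ∀ i, Measurable (X i))
    (hindep : iIndepFun X μ)
    (hident : ∀ i, IdentDistrib (X i) (X 0) μ μ)
    (hnn : ∀ i ω, 0 ≤ X i ω) (hl₀ : 0 < l₀) (j n : ℕ) :
    μ {ω | (∑ i ∈ Finset.Ico j n, X i ω) ≤ 1}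
      ≤ ENNReal.ofReal (Real.exp l₀ * mgf (X 0) μ (-l₀) ^ (n - j)) := by
  set B : Ω → ℝ := fun ω => ∑ i ∈ Finset.Ico j n, X i ω with hB
  have hBmeas : Measurable B := Finset.measurable_sum _ fun i _ => hmeas i
  have hBnn : ∀ ω, 0 ≤ B ω := fun ω => Finset.sum_nonneg fun i _ => hnn i ω
  have hint : Integrable (fun ω => Real.exp (-l₀ * B ω)) μ := by
    refine Integrable.mono' (integrable_const 1)
      ((hBmeas.const_mul _).exp.aestronglyMeasurable) ?_
    filter_upwards with ω
    rw [Real.norm_eq_abs, abs_of_pos (Real.exp_pos _), Real.exp_le_one_iff]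
    have := hBnn ω
    nlinarith [hl₀]
  have h2 := measure_le_le_exp_mul_mgf (μ := μ) (X := B) (t := -l₀) 1
    (by linarith) hint
  have hmgf : mgf B μ (-l₀) = mgf (X 0) μ (-l₀) ^ (n - j) := by
    have hBe : B = ∑ i ∈ Finset.Ico j n, X i := by
      funext ω; rw [hB]; exact (Finset.sum_apply ω (Finset.Ico j n) X).symm
    rw [hBe, hindep.mgf_sum hmeas]
    rw [Finset.prod_congr rfl fun i _ => mgf_ident hident i (-l₀)]
    simp [Nat.card_Ico]
  rw [hmgf, neg_neg, mul_one] at h2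
  calc μ {ω | B ω ≤ 1} = ENNReal.ofReal (μ {ω | B ω ≤ 1}).toReal :=
        (ENNReal.ofReal_toReal (measure_ne_top _ _)).symm
    _ ≤ _ := ENNReal.ofReal_le_ofReal h2

lemma mgf_neg_lt_one (hmeas : ∀ i, Measurable (X i))
    (hnn : ∀ i ω, 0 ≤ X i ω) (hmean : 0 < ∫ ω, X 0 ω ∂μ) (hl₀ : 0 < l₀) :
    mgf (X 0) μ (-l₀) < 1 := by
  -- there is c > 0 with positive probability that X 0 ≥ c
  obtain ⟨c, hc, hp⟩ : ∃ c : ℝ, 0 < c ∧ 0 < μ {ω | c ≤ X 0 ω} := by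
    by_contra h
    push_neg at h
    have hzero : ∀ c : ℝ, 0 < c → μ {ω | c ≤ X 0 ω} = 0 := fun c hc =>
      le_antisymm (h c hc) zero_le
    have hae : ∀ᵐ ω ∂μ, X 0 ω = 0 := by
      have hU : μ {ω | X 0 ω ≠ 0} = 0 := by
        have hsub : {ω | X 0 ω ≠ 0} ⊆ ⋃ n : ℕ, {ω | 1/(n+1 : ℝ) ≤ X 0 ω} := by
          intro ω hω
          have hpos : 0 < X 0 ω := lt_of_le_of_ne (hnn 0 ω) (Ne.symm hω)
          obtain ⟨n, hn⟩ := exists_nat_one_div_lt hpos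
          exact Set.mem_iUnion.2 ⟨n, le_of_lt hn⟩
        refine measure_mono_null hsub ?_
        refine measure_iUnion_null fun n => hzero _ (by positivity)
      simpa [ae_iff] using hU
    rw [integral_congr_ae hae] at hmean
    simp at hmean
  set p : ℝ := (μ {ω | c ≤ X 0 ω}).toReal with hpdef
  have hpp : 0 < p := ENNReal.toReal_pos hp.ne' (measure_ne_top _ _)
  have hms : MeasurableSet {ω | c ≤ X 0 ω} :=
    measurableSet_le measurable_const (hmeas 0)
  have hintexp : Integrable (fun ω => Real.exp (-l₀ * X 0 ω)) μ := by
    refine Integrable.mono' (integrable_const 1)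
      (((hmeas 0).const_mul _).exp.aestronglyMeasurable) ?_
    filter_upwards with ω
    rw [Real.norm_eq_abs, abs_of_pos (Real.exp_pos _), Real.exp_le_one_iff]
    nlinarith [hnn 0 ω, hl₀]
  have hptwise : ∀ ω, Real.exp (-l₀ * X 0 ω)
      ≤ 1 - Set.indicator {ω | c ≤ X 0 ω} (fun _ => 1 - Real.exp (-l₀ * c)) ω := by
    intro ω
    by_cases hω : c ≤ X 0 ω
    · rw [Set.indicator_of_mem (show ω ∈ {ω' | c ≤ X 0 ω'} from hω)]
      have : Real.exp (-l₀ * X 0 ω) ≤ Real.exp (-l₀ * c) :=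
        Real.exp_le_exp.2 (by nlinarith)
      linarith
    · rw [Set.indicator_of_notMem (show ω ∉ {ω' | c ≤ X 0 ω'} from hω)]
      have : Real.exp (-l₀ * X 0 ω) ≤ 1 := by
        rw [Real.exp_le_one_iff]; nlinarith [hnn 0 ω, hl₀]
      linarith
  have hind : Integrable (Set.indicator {ω | c ≤ X 0 ω}
      (fun _ => 1 - Real.exp (-l₀ * c))) μ :=
    (integrable_const _).indicator hms
  have hI : ∫ ω, Set.indicator {ω | c ≤ X 0 ω} (fun _ => 1 - Real.exp (-l₀ * c)) ω ∂μ
      = p * (1 - Real.exp (-l₀ * c)) := by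
    rw [integral_indicator_const _ hms]
    simp [hpdef, mul_comm]
    exact Or.inl rfl
  have hmono : mgf (X 0) μ (-l₀)
      ≤ ∫ ω, (1 - Set.indicator {ω | c ≤ X 0 ω} (fun _ => 1 - Real.exp (-l₀ * c)) ω) ∂μ := by
    exact integral_mono hintexp ((integrable_const 1).sub hind) hptwise
  rw [integral_sub (integrable_const 1) hind, hI] at hmono
  simp only [integral_const, Measure.real, measure_univ, ENNReal.toReal_one, smul_eq_mul, one_mul, mul_one] at hmono
  have hec : Real.exp (-l₀ * c) < 1 := by
    rw [Real.exp_lt_one_iff]; nlinarith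
  nlinarith

def res (X : ℕ → Ω → ℝ) (T : Finset ℕ) : Ω → ((i : T) → ℝ) := fun ω i => X i ω

noncomputable def psum (j i : ℕ) (v : (l : (Finset.range j : Finset ℕ)) → ℝ) : ℝ :=
  ∑ l ∈ Finset.univ.filter (fun l : (Finset.range j : Finset ℕ) => (l : ℕ) < i), v l

lemma psum_meas (j i : ℕ) : Measurable (psum j i) :=
  Finset.measurable_sum _ fun l _ => measurable_pi_apply l

lemma psum_apply (j i : ℕ) (hij : i ≤ j) (ω : Ω) :
    psum j i (res X (Finset.range j) ω) = ∑ l ∈ Finset.range i, X l ω := by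
  unfold psum res
  rw [Finset.sum_filter]
  rw [Finset.sum_coe_sort (Finset.range j) (fun m => if m < i then X m ω else 0)]
  rw [← Finset.sum_filter]
  congr 1
  ext l
  simp only [Finset.mem_filter, Finset.mem_range]
  omega

lemma sum_res (T : Finset ℕ) (ω : Ω) :
    (∑ l : T, res X T ω l) = ∑ l ∈ T, X l ω :=
  Finset.sum_coe_sort T (fun m => X m ω)


/-- The renewal bound: expected number of visits to an interval of length 1. -/
lemma renewal (hmeas : ∀ i, Measurable (X i))
    (hindep : iIndepFun X μ)
    (hident : ∀ i, IdentDistrib (X i) (X 0) μ μ)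
    (hnn : ∀ i ω, 0 ≤ X i ω) (hl₀ : 0 < l₀) (y : ℝ) :
    ∑' n, μ {ω | (∑ j ∈ Finset.range n, X j ω) ∈ Set.Ioc y (y + 1)}
      ≤ ENNReal.ofReal (Real.exp l₀) * (1 - ENNReal.ofReal (mgf (X 0) μ (-l₀)))⁻¹ := by
  classical
  set ρ : ℝ := mgf (X 0) μ (-l₀) with hρ
  have hρ0 : 0 ≤ ρ := mgf_nonneg
  set N : ℕ → Set Ω := fun j =>
    {ω | y < ∑ l ∈ Finset.range j, X l ω ∧ ∀ i < j, (∑ l ∈ Finset.range i, X l ω) ≤ y}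
    with hN
  have hNmeas : ∀ j, MeasurableSet (N j) := by
    intro j
    have h1 : MeasurableSet {ω : Ω | y < ∑ l ∈ Finset.range j, X l ω} :=
      measurableSet_lt measurable_const (Finset.measurable_sum _ fun i _ => hmeas i)
    have h2 : MeasurableSet {ω : Ω | ∀ i < j, (∑ l ∈ Finset.range i, X l ω) ≤ y} := by
      rw [show {ω : Ω | ∀ i < j, (∑ l ∈ Finset.range i, X l ω) ≤ y}
          = ⋂ (i : ℕ) (_ : i < j), {ω : Ω | (∑ l ∈ Finset.range i, X l ω) ≤ y} by
        ext ω; simp [Set.mem_iInter]]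
      exact MeasurableSet.iInter fun i => MeasurableSet.iInter fun _ =>
        measurableSet_le (Finset.measurable_sum _ fun l _ => hmeas l) measurable_const
    exact h1.inter h2
  have hNdisj : Pairwise (Function.onFun Disjoint N) := by
    intro j j' hjj'
    rcases hjj'.lt_or_gt with h | h
    · refine Set.disjoint_left.2 fun ω hj hj' => ?_
      exact absurd (hj'.2 j h) (not_le.2 hj.1)
    · refine Set.disjoint_left.2 fun ω hj hj' => ?_
      exact absurd (hj.2 j' h) (not_le.2 hj'.1)
  have hNsum : ∑' j, μ (N j) ≤ 1 := by
    rw [← measure_iUnion hNdisj hNmeas]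
    exact prob_le_one
  set Bl : ℕ → ℕ → Set Ω := fun j n => {ω | (∑ i ∈ Finset.Ico j n, X i ω) ≤ 1} with hBl
  set b : ℕ → ENNReal := fun m => ENNReal.ofReal (Real.exp l₀ * ρ ^ m) with hb
  -- the independence splitting
  have hsplit : ∀ j n, μ (N j ∩ Bl j n) = μ (N j) * μ (Bl j n) := by
    intro j n
    have hNeq : N j = (fun ω (i : (Finset.range j : Finset ℕ)) => X i ω) ⁻¹'
        ({v | y < ∑ l : (Finset.range j : Finset ℕ), v l} ∩
          ⋂ (i : ℕ) (_ : i < j), {v | psum j i v ≤ y}) := by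
      ext ω
      simp only [hN, Set.mem_setOf_eq, Set.mem_preimage, Set.mem_inter_iff, Set.mem_iInter]
      constructor
      · rintro ⟨h1, h2⟩
        refine ⟨by rw [show (fun i : (Finset.range j : Finset ℕ) => X i ω)
            = res X (Finset.range j) ω from rfl, sum_res]; exact h1, fun i hi => ?_⟩
        rw [show (fun i : (Finset.range j : Finset ℕ) => X i ω)
            = res X (Finset.range j) ω from rfl, psum_apply j i hi.le]
        exact h2 i hi
      · rintro ⟨h1, h2⟩
        rw [show (fun i : (Finset.range j : Finset ℕ) => X i ω)
            = res X (Finset.range j) ω from rfl, sum_res] at h1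
        refine ⟨h1, fun i hi => ?_⟩
        have := h2 i hi
        rwa [show (fun i : (Finset.range j : Finset ℕ) => X i ω)
            = res X (Finset.range j) ω from rfl, psum_apply j i hi.le] at this
    have hBleq : Bl j n = (fun ω (i : (Finset.Ico j n : Finset ℕ)) => X i ω) ⁻¹'
        {v | (∑ l : (Finset.Ico j n : Finset ℕ), v l) ≤ 1} := by
      ext ω
      simp only [hBl, Set.mem_setOf_eq, Set.mem_preimage]
      rw [show (fun i : (Finset.Ico j n : Finset ℕ) => X i ω)
          = res X (Finset.Ico j n) ω from rfl, sum_res]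
    rw [hNeq, hBleq]
    refine indep_pre hindep hmeas _ _ ?_ _ _ ?_ ?_
    · rw [Finset.disjoint_left]; intro a ha ha'
      simp only [Finset.mem_range] at ha
      simp only [Finset.mem_Ico] at ha'
      omega
    · refine MeasurableSet.inter ?_ ?_
      · exact measurableSet_lt measurable_const
          (Finset.measurable_sum _ fun l _ => measurable_pi_apply l)
      · exact MeasurableSet.iInter fun i => MeasurableSet.iInter fun _ =>
          measurableSet_le (psum_meas j i) measurable_const
    · exact measurableSet_le (Finset.measurable_sum _ fun l _ => measurable_pi_apply l)
        measurable_const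
  -- inclusion into first-passage decomposition
  have hincl : ∀ n, {ω | (∑ j ∈ Finset.range n, X j ω) ∈ Set.Ioc y (y + 1)}
      ⊆ ⋃ j ∈ Finset.range (n + 1), N j ∩ Bl j n := by
    intro n ω hω
    simp only [Set.mem_setOf_eq, Set.mem_Ioc] at hω
    have hex : ∃ j, y < ∑ l ∈ Finset.range j, X l ω := ⟨n, hω.1⟩
    have hj : y < ∑ l ∈ Finset.range (Nat.find hex), X l ω := Nat.find_spec hex
    have hjn : Nat.find hex ≤ n := Nat.find_le hω.1
    refine Set.mem_biUnion (Finset.mem_range.2 (Nat.lt_succ_of_le hjn)) ⟨⟨hj, ?_⟩, ?_⟩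
    · exact fun i hi => not_lt.1 (Nat.find_min hex hi)
    · show (∑ i ∈ Finset.Ico (Nat.find hex) n, X i ω) ≤ 1
      rw [Finset.sum_Ico_eq_sub _ hjn]
      linarith [hω.2]
  have key : ∀ n, μ {ω | (∑ j ∈ Finset.range n, X j ω) ∈ Set.Ioc y (y + 1)}
      ≤ ∑ j ∈ Finset.range (n + 1), μ (N j) * b (n - j) := by
    intro n
    refine le_trans (measure_mono (hincl n)) (le_trans (measure_biUnion_finset_le _ _) ?_)
    refine Finset.sum_le_sum fun j _ => ?_
    rw [hsplit j n]
    exact mul_le_mul_right (chernoff_block hmeas hindep hident hnn hl₀ j n) _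
  calc ∑' n, μ {ω | (∑ j ∈ Finset.range n, X j ω) ∈ Set.Ioc y (y + 1)}
      ≤ ∑' n, ∑ j ∈ Finset.range (n + 1), μ (N j) * b (n - j) := ENNReal.tsum_le_tsum key
    _ = ∑' n, ∑' j, (if j ≤ n then μ (N j) * b (n - j) else 0) := by
        refine tsum_congr fun n => ?_
        rw [tsum_eq_sum (s := Finset.range (n + 1))
          (fun j hj => if_neg (fun hc => hj (Finset.mem_range.2 (by omega))))]
        refine Finset.sum_congr rfl fun j hj => ?_
        exact (if_pos (by simp only [Finset.mem_range] at hj; omega)).symm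
    _ = ∑' j, ∑' n, (if j ≤ n then μ (N j) * b (n - j) else 0) := ENNReal.tsum_comm
    _ = ∑' j, ∑' m, μ (N j) * b m := by
        refine tsum_congr fun j => ?_
        rw [← Function.Injective.tsum_eq (f := fun n => if j ≤ n then μ (N j) * b (n - j) else 0)
          (add_right_injective j) (fun n hn => ?_)]
        · refine tsum_congr fun m => ?_
          rw [if_pos (Nat.le_add_right j m), Nat.add_sub_cancel_left]
        · by_contra hc
          simp only [Set.mem_range, not_exists] at hc
          apply hn
          simp only [Function.mem_support, ne_eq, ite_eq_right_iff, not_forall] at hn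
          obtain ⟨hjn, -⟩ := hn
          exact absurd (⟨n - j, by omega⟩ : ∃ m, j + m = n) (by simpa using hc)
    _ = ∑' j, μ (N j) * ∑' m, b m := by
        exact tsum_congr fun j => ENNReal.tsum_mul_left
    _ = (∑' j, μ (N j)) * ∑' m, b m := ENNReal.tsum_mul_right
    _ ≤ 1 * ∑' m, b m := mul_le_mul_left hNsum _
    _ = ∑' m, b m := one_mul _
    _ = ENNReal.ofReal (Real.exp l₀) * (1 - ENNReal.ofReal ρ)⁻¹ := by
        rw [← ENNReal.tsum_geometric (ENNReal.ofReal ρ), ← ENNReal.tsum_mul_left]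
        refine tsum_congr fun m => ?_
        show ENNReal.ofReal (Real.exp l₀ * ρ ^ m) = _
        rw [ENNReal.ofReal_mul (Real.exp_pos _).le, ENNReal.ofReal_pow hρ0]


end Overshoot

open Overshoot

/-- Overshoot estimate: if `X₁, X₂, …` are i.i.d. nonnegative random variables with
`E[X₁] > 0` and `E[exp (λ₀ X₁)] < ∞` for some `λ₀ > 0`, `Sₙ = X₁ + ⋯ + Xₙ` and
`τ_x = inf {n ≥ 0 : Sₙ ≥ x}`, then there is `C > 0` (depending only on the law of `X₁`
and `λ₀`) with `P[S_{τ_x} - x ≥ α] ≤ C exp (-λ₀ α)` for all `x ≥ 0` and `α > 0`. -/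
theorem overshoot_exponential_tail {Ω : Type*} [MeasurableSpace Ω] (μ : Measure Ω)
    [IsProbabilityMeasure μ] (X : ℕ → Ω → ℝ) (hmeas : ∀ i, Measurable (X i))
    (hindep : ProbabilityTheory.iIndepFun X μ)
    (hident : ∀ i, ProbabilityTheory.IdentDistrib (X i) (X 0) μ μ)
    (hnn : ∀ i ω, 0 ≤ X i ω)
    (hmean : 0 < ∫ ω, X 0 ω ∂μ)
    (l₀ : ℝ) (hl₀ : 0 < l₀)
    (hexp : Integrable (fun ω => Real.exp (l₀ * X 0 ω)) μ) :
    ∃ C : ℝ, 0 < C ∧ ∀ x : ℝ, 0 ≤ x → ∀ α : ℝ, 0 < α →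
      μ {ω | α ≤ (∑ j ∈ Finset.range (sInf {n : ℕ | x ≤ ∑ j ∈ Finset.range n, X j ω}),
          X j ω) - x}
        ≤ ENNReal.ofReal (C * Real.exp (-l₀ * α)) := by
  classical
  set ρ : ℝ := mgf (X 0) μ (-l₀) with hρdef
  set M : ℝ := mgf (X 0) μ l₀ with hMdef
  have hρ0 : 0 ≤ ρ := mgf_nonneg
  have hρ1 : ρ < 1 := mgf_neg_lt_one hmeas hnn hmean hl₀
  have hM : 0 < M := mgf_pos hexp
  have hr1 : Real.exp (-l₀) < 1 := Real.exp_lt_one_iff.2 (by linarith)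
  have hr0 : (0:ℝ) ≤ Real.exp (-l₀) := (Real.exp_pos _).le
  refine ⟨Real.exp l₀ * (1 - ρ)⁻¹ * M * (1 - Real.exp (-l₀))⁻¹, ?_, ?_⟩
  · have h1 : (0:ℝ) < 1 - ρ := by linarith
    have h2 : (0:ℝ) < 1 - Real.exp (-l₀) := by linarith
    positivity
  intro x hx α hα
  set A : ℕ → ℕ → Set Ω := fun n k =>
    {ω | (∑ j ∈ Finset.range n, X j ω) ∈ Set.Ioc (x - ((k:ℝ)+1)) (x - ((k:ℝ)+1) + 1)}
    with hA
  set D : ℕ → ℕ → Set Ω := fun n k => A n k ∩ {ω | α + k ≤ X n ω} with hD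
  -- inclusion
  have hsub : {ω | α ≤ (∑ j ∈ Finset.range (sInf {n : ℕ | x ≤ ∑ j ∈ Finset.range n, X j ω}),
      X j ω) - x} ⊆ ⋃ n, ⋃ k, D n k := by
    intro ω hω
    simp only [Set.mem_setOf_eq] at hω
    set T : Set ℕ := {n : ℕ | x ≤ ∑ j ∈ Finset.range n, X j ω} with hT
    have h0 : sInf T ≠ 0 := by
      intro h0
      rw [h0] at hω
      simp only [Finset.range_zero, Finset.sum_empty] at hω
      linarith
    have hne : T.Nonempty := by
      by_contra hne
      rw [Set.not_nonempty_iff_eq_empty] at hne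
      rw [hne, Nat.sInf_empty] at h0
      exact h0 rfl
    obtain ⟨n, hn⟩ : ∃ n, sInf T = n + 1 := Nat.exists_eq_succ_of_ne_zero h0
    have hmem : sInf T ∈ T := Nat.sInf_mem hne
    have hnT : n ∉ T := fun hc => by
      have := Nat.sInf_le hc
      omega
    have hSn : (∑ j ∈ Finset.range n, X j ω) < x := by
      simp only [hT, Set.mem_setOf_eq, not_le] at hnT
      exact hnT
    have hS1 : x + α ≤ ∑ j ∈ Finset.range (n+1), X j ω := by
      rw [hn] at hω
      linarith
    set k : ℕ := ⌊x - ∑ j ∈ Finset.range n, X j ω⌋₊ with hk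
    have hk1 : (k:ℝ) ≤ x - ∑ j ∈ Finset.range n, X j ω := Nat.floor_le (by linarith)
    have hk2 : x - (∑ j ∈ Finset.range n, X j ω) < k + 1 := Nat.lt_floor_add_one _
    refine Set.mem_iUnion.2 ⟨n, Set.mem_iUnion.2 ⟨k, ⟨?_, ?_⟩⟩⟩
    · simp only [hA, Set.mem_setOf_eq, Set.mem_Ioc]
      constructor <;> linarith
    · simp only [Set.mem_setOf_eq]
      rw [Finset.sum_range_succ] at hS1
      linarith
  -- independence + Chernoff bound on each piece
  have hDle : ∀ n k, μ (D n k)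
      ≤ μ (A n k) * ENNReal.ofReal (Real.exp (-l₀ * (α + k)) * M) := by
    intro n k
    have hAeq : A n k = (fun ω (i : (Finset.range n : Finset ℕ)) => X i ω) ⁻¹'
        {v | (∑ l : (Finset.range n : Finset ℕ), v l)
          ∈ Set.Ioc (x - ((k:ℝ)+1)) (x - ((k:ℝ)+1) + 1)} := by
      ext ω
      simp only [hA, Set.mem_setOf_eq, Set.mem_preimage]
      rw [Finset.sum_coe_sort (Finset.range n) (fun m => X m ω)]
    have hXeq : {ω | α + k ≤ X n ω} = (fun ω (i : (({n}:Finset ℕ) : Finset ℕ)) => X i ω) ⁻¹'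
        {v | α + k ≤ v ⟨n, Finset.mem_singleton_self n⟩} := by
      ext ω; simp only [Set.mem_setOf_eq, Set.mem_preimage]
    have hsplit : μ (D n k) = μ (A n k) * μ {ω | α + k ≤ X n ω} := by
      rw [hD]
      show μ (A n k ∩ {ω | α + k ≤ X n ω}) = _
      rw [hAeq, hXeq]
      refine indep_pre hindep hmeas _ _ ?_ _ _ ?_ ?_
      · rw [Finset.disjoint_left]
        intro a ha ha'
        simp only [Finset.mem_range] at ha
        simp only [Finset.mem_singleton] at ha'
        omega
      · exact (Finset.measurable_sum _ fun l _ => measurable_pi_apply l)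
          measurableSet_Ioc
      · exact measurableSet_le measurable_const (measurable_pi_apply _)
    rw [hsplit]
    exact mul_le_mul_right (chernoff_single hmeas hident hl₀ hexp n (α + k)) _
  -- put it together
  have hQ := fun k => renewal (μ := μ) hmeas hindep hident hnn hl₀ (x - ((k:ℝ)+1))
  set Q : ENNReal := ENNReal.ofReal (Real.exp l₀) * (1 - ENNReal.ofReal ρ)⁻¹ with hQdef
  set w : ℕ → ENNReal := fun k => ENNReal.ofReal (Real.exp (-l₀ * (α + k)) * M) with hw
  have main : μ {ω | α ≤ (∑ j ∈ Finset.range (sInf {n : ℕ | x ≤ ∑ j ∈ Finset.range n, X j ω}),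
      X j ω) - x} ≤ Q * ∑' k, w k := by
    calc μ _ ≤ μ (⋃ n, ⋃ k, D n k) := measure_mono hsub
      _ ≤ ∑' n, μ (⋃ k, D n k) := measure_iUnion_le _
      _ ≤ ∑' n, ∑' k, μ (D n k) := ENNReal.tsum_le_tsum fun n => measure_iUnion_le _
      _ ≤ ∑' n, ∑' k, μ (A n k) * w k :=
          ENNReal.tsum_le_tsum fun n => ENNReal.tsum_le_tsum fun k => hDle n k
      _ = ∑' k, ∑' n, μ (A n k) * w k := ENNReal.tsum_comm
      _ = ∑' k, (∑' n, μ (A n k)) * w k := tsum_congr fun k => ENNReal.tsum_mul_right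
      _ ≤ ∑' k, Q * w k := ENNReal.tsum_le_tsum fun k => mul_le_mul_left (hQ k) _
      _ = Q * ∑' k, w k := ENNReal.tsum_mul_left
  have hwsum : ∑' k, w k = ENNReal.ofReal (M * Real.exp (-l₀ * α))
      * (1 - ENNReal.ofReal (Real.exp (-l₀)))⁻¹ := by
    rw [← ENNReal.tsum_geometric (ENNReal.ofReal (Real.exp (-l₀))), ← ENNReal.tsum_mul_left]
    refine tsum_congr fun k => ?_
    show ENNReal.ofReal (Real.exp (-l₀ * (α + k)) * M) = _
    rw [← ENNReal.ofReal_pow hr0, ← ENNReal.ofReal_mul (by positivity)]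
    congr 1
    rw [← Real.exp_nat_mul]
    rw [show -l₀ * (α + k) = -l₀ * α + (k:ℝ) * (-l₀) by ring, Real.exp_add]
    ring
  have hinv : ∀ s : ℝ, 0 ≤ s → s < 1 →
      (1 - ENNReal.ofReal s)⁻¹ = ENNReal.ofReal ((1-s)⁻¹) := by
    intro s h0 h1
    rw [ENNReal.ofReal_inv_of_pos (by linarith), ENNReal.ofReal_sub _ h0, ENNReal.ofReal_one]
  refine main.trans ?_
  rw [hwsum, hQdef, hinv ρ hρ0 hρ1, hinv _ hr0 hr1]
  have collapse : ∀ a b c d : ℝ, 0 ≤ a → 0 ≤ b → 0 ≤ c →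
      ENNReal.ofReal a * ENNReal.ofReal b * (ENNReal.ofReal c * ENNReal.ofReal d)
        = ENNReal.ofReal (a * b * (c * d)) := by
    intro a b c d ha hb hc
    rw [← ENNReal.ofReal_mul ha, ← ENNReal.ofReal_mul hc,
      ← ENNReal.ofReal_mul (mul_nonneg ha hb)]
  rw [collapse _ _ _ _ (Real.exp_pos _).le (inv_nonneg.2 (by linarith)) (by positivity)]
  refine ENNReal.ofReal_le_ofReal (le_of_eq ?_)
  ring
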